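/- arXiv:1112.0136 — 2 statements merged into one kernel-verified Lean document; each statement's English description precedes it below -/
import Mathlib

section
/- Fix Δ > 0. For a > 0 define L(a) = Σ_{i ∈ ℤ} 2·√(max(a² − (iΔ)², 0)), the total length of the chords cut by the horizontal lines {y = iΔ}, i ∈ ℤ, inside the closed disk of radius a centered at the origin. Then lim_{a→∞} L(a)/(π a²) = 1/Δ. -/
open Real Filter intervalIntegral MeasureTheory


lemma int01 : ∫ x in (0:ℝ)..1, Real.sqrt (1 - x^2) = π/4 := by
  have h := integral_sqrt_one_sub_sq
  have hneg : ∫ x in (-1:ℝ)..0, Real.sqrt (1 - x^2) = ∫ x in (0:ℝ)..1, Real.sqrt (1 - x^2) := by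
    have := intervalIntegral.integral_comp_neg (a := (0:ℝ)) (b := 1) (fun x => Real.sqrt (1 - x^2))
    simp only [neg_zero] at this
    rw [← this]
    simp [neg_sq]
  have hsplit : ∫ x in (-1:ℝ)..1, Real.sqrt (1 - x^2) =
      (∫ x in (-1:ℝ)..0, Real.sqrt (1 - x^2)) + ∫ x in (0:ℝ)..1, Real.sqrt (1 - x^2) := by
    rw [intervalIntegral.integral_add_adjacent_intervals] <;>
      exact (Continuous.intervalIntegrable (by continuity) _ _)
  rw [hsplit, hneg] at h
  linarith

lemma fcont (a : ℝ) : Continuous (fun x : ℝ => 2 * Real.sqrt (max (a^2 - x^2) 0)) := by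
  continuity

lemma intf (a : ℝ) (ha : 0 < a) (T : ℝ) (hT : a ≤ T) :
    ∫ x in (0:ℝ)..T, 2 * Real.sqrt (max (a^2 - x^2) 0) = π * a^2 / 2 := by
  have hint : ∀ u v : ℝ, IntervalIntegrable (fun x => 2 * Real.sqrt (max (a^2 - x^2) 0)) volume u v :=
    fun u v => (fcont a).intervalIntegrable u v
  have hsplit := intervalIntegral.integral_add_adjacent_intervals (hint 0 a) (hint a T)
  have h2 : ∫ x in a..T, 2 * Real.sqrt (max (a^2 - x^2) 0) = 0 := by
    rw [intervalIntegral.integral_congr (g := fun _ => 0), intervalIntegral.integral_zero]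
    intro x hx
    rw [Set.uIcc_of_le hT] at hx
    have h1 : a^2 ≤ x^2 := by nlinarith [hx.1]
    simp [max_eq_right (by linarith : a^2 - x^2 ≤ 0)]
  have h1 : ∫ x in (0:ℝ)..a, 2 * Real.sqrt (max (a^2 - x^2) 0) = π * a^2 / 2 := by
    rw [intervalIntegral.integral_congr (g := fun x => 2 * Real.sqrt (a^2 - x^2))]
    · have hsub := intervalIntegral.integral_comp_mul_right
        (a := (0:ℝ)) (b := 1) (fun x => 2 * Real.sqrt (a^2 - x^2)) (ne_of_gt ha)
      simp only [zero_mul, one_mul, smul_eq_mul] at hsub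
      have heq : ∀ x ∈ Set.uIcc (0:ℝ) 1, 2 * Real.sqrt (a^2 - (x*a)^2) = (2*a) * Real.sqrt (1 - x^2) := by
        intro x hx
        have : a^2 - (x*a)^2 = a^2 * (1 - x^2) := by ring
        rw [this, Real.sqrt_mul (sq_nonneg a), Real.sqrt_sq ha.le]
        ring
      rw [intervalIntegral.integral_congr heq, intervalIntegral.integral_const_mul, int01] at hsub
      have ha' : a ≠ 0 := ne_of_gt ha
      rw [intervalIntegral.integral_const_mul]
      field_simp at hsub
      ring_nf at hsub ⊢
      rw [intervalIntegral.integral_mul_const] at hsub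
      linarith
    · intro x hx
      rw [Set.uIcc_of_le ha.le] at hx
      have : (0:ℝ) ≤ a^2 - x^2 := by nlinarith [hx.1, hx.2]
      simp [max_eq_left this]
  rw [← hsplit, h1, h2, add_zero]

lemma key (Δ : ℝ) (hΔ : 0 < Δ) (a : ℝ) (ha : 0 < a) :
    π * a^2 / Δ - 2*a ≤ (∑' i : ℤ, 2 * Real.sqrt (max (a ^ 2 - ((i : ℝ) * Δ) ^ 2) 0)) ∧
    (∑' i : ℤ, 2 * Real.sqrt (max (a ^ 2 - ((i : ℝ) * Δ) ^ 2) 0)) ≤ π * a^2 / Δ + 2*a := by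
  set G : ℝ → ℝ := fun x => 2 * Real.sqrt (max (a^2 - (x*Δ)^2) 0) with hGdef
  set N : ℕ := ⌈a/Δ⌉₊ with hNdef
  have hN : a ≤ N * Δ := (div_le_iff₀ hΔ).mp (Nat.le_ceil (a/Δ))
  have hzero : ∀ x : ℝ, a ≤ x * Δ → G x = 0 := by
    intro x hx
    have h1 : a^2 ≤ (x*Δ)^2 := by nlinarith
    simp [hGdef, max_eq_right (by linarith : a^2 - (x*Δ)^2 ≤ 0)]
  have hvan : ∀ n : ℕ, n ∉ Finset.range (N+1) → G n = 0 := by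
    intro n hn
    apply hzero
    have hn' : N + 1 ≤ n := by
      by_contra h
      exact hn (Finset.mem_range.mpr (by omega))
    have : (N:ℝ) ≤ n := by exact_mod_cast Nat.le_of_succ_le hn'
    nlinarith
  have sum1 : Summable (fun n : ℕ => G n) := summable_of_ne_finset_zero hvan
  -- the ℤ-indexed summand
  set f : ℤ → ℝ := fun i => 2 * Real.sqrt (max (a ^ 2 - ((i : ℝ) * Δ) ^ 2) 0) with hfdef
  have hfnat : ∀ n : ℕ, f (n : ℤ) = G n := by intro n; simp [hfdef, hGdef]
  have hfneg : ∀ n : ℕ, f (-((n:ℤ) + 1)) = G ((n:ℝ) + 1) := by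
    intro n
    simp only [hfdef, hGdef]
    push_cast
    ring_nf
  have sum1' : Summable (fun n : ℕ => f (n : ℤ)) := by
    simpa only [hfnat] using sum1
  have sum2 : Summable (fun n : ℕ => G ((n:ℝ) + 1)) := by
    apply summable_of_ne_finset_zero (s := Finset.range (N+1))
    intro n hn
    have hn' : N + 1 ≤ n := by
      by_contra h
      exact hn (Finset.mem_range.mpr (by omega))
    have hNn : (N:ℝ) ≤ n := by exact_mod_cast Nat.le_of_succ_le hn'
    apply hzero
    nlinarith
  have sum2' : Summable (fun n : ℕ => f (-((n:ℤ) + 1))) := by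
    simpa only [hfneg] using sum2
  have hS : (∑' i : ℤ, f i) = (∑' n : ℕ, G n) + ∑' n : ℕ, G ((n:ℝ) + 1) := by
    rw [tsum_of_nat_of_neg_add_one sum1' sum2', tsum_congr hfnat, tsum_congr hfneg]
  have hshift : (∑' n : ℕ, G n) = G 0 + ∑' n : ℕ, G ((n:ℝ) + 1) := by
    rw [sum1.tsum_eq_zero_add]
    congr 1
    · norm_num
    · apply tsum_congr; intro n; push_cast; ring_nf
  set T0 : ℝ := ∑' n : ℕ, G n with hT0
  have hSval : (∑' i : ℤ, f i) = 2 * T0 - G 0 := by rw [hS, hshift]; ring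
  -- G 0 = 2 a
  have hG0 : G 0 = 2 * a := by
    simp [hGdef, max_eq_left (by positivity : (0:ℝ) ≤ a^2), Real.sqrt_sq ha.le]
  -- T0 as a finite sum
  have hT0sum : T0 = ∑ n ∈ Finset.range (N+1), G n := tsum_eq_sum hvan
  -- antitone
  have hanti : AntitoneOn G (Set.Icc (0:ℝ) (0 + ((N+1:ℕ):ℝ))) := by
    intro x hx y hy hxy
    have h0 : 0 ≤ x*Δ := mul_nonneg hx.1 hΔ.le
    have hle : x*Δ ≤ y*Δ := mul_le_mul_of_nonneg_right hxy hΔ.le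
    have h1 : (x*Δ)^2 ≤ (y*Δ)^2 := by nlinarith
    simp only [hGdef]
    gcongr
  -- integral value
  have intG : ∀ T : ℝ, a ≤ T * Δ → (∫ x in (0:ℝ)..T, G x) = π * a^2 / (2*Δ) := by
    intro T hT
    have := intervalIntegral.integral_comp_mul_right
      (a := (0:ℝ)) (b := T) (fun x => 2 * Real.sqrt (max (a^2 - x^2) 0)) (ne_of_gt hΔ)
    simp only [zero_mul, smul_eq_mul] at this
    rw [hGdef]
    simp only []
    rw [this, intf a ha (T*Δ) hT]
    field_simp
  have hint1 : (∫ x in (0:ℝ)..(0 + ((N+1:ℕ):ℝ)), G x) = π * a^2 / (2*Δ) := by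
    rw [zero_add]
    apply intG
    push_cast
    nlinarith
  have hint2 : (∫ x in (0:ℝ)..(0 + ((N:ℕ):ℝ)), G x) = π * a^2 / (2*Δ) := by
    rw [zero_add]; exact intG _ hN
  -- lower bound on T0
  have hlow : π * a^2 / (2*Δ) ≤ T0 := by
    have h := hanti.integral_le_sum
    rw [hint1] at h
    simpa [hT0sum] using h
  -- upper bound on T0
  have hup : T0 ≤ G 0 + π * a^2 / (2*Δ) := by
    have h := (hanti.mono (Set.Icc_subset_Icc le_rfl (by push_cast; linarith))).sum_le_integral
      (x₀ := (0:ℝ)) (a := N)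
    rw [hint2] at h
    rw [hT0sum, Finset.sum_range_succ']
    have : ∀ i : ℕ, G ((i:ℝ) + 1) = G (0 + ((i+1:ℕ):ℝ)) := by intro i; push_cast; ring_nf
    simp only [Nat.cast_add, Nat.cast_one] at h ⊢
    simp only [zero_add] at h
    have hsum_eq : ∑ i ∈ Finset.range N, G ((i:ℝ) + 1) ≤ π * a^2 / (2*Δ) := h
    push_cast
    linarith
  have hpi : π * a^2 / Δ = 2 * (π * a^2 / (2*Δ)) := by field_simp
  constructor
  · rw [hSval]; linarith
  · rw [hSval]; linarith

theorem stmt7 (Δ : ℝ) (hΔ : 0 < Δ) (L : ℝ → ℝ)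
    (hL : ∀ a, L a = ∑' i : ℤ, 2 * Real.sqrt (max (a ^ 2 - ((i : ℝ) * Δ) ^ 2) 0)) :
    Filter.Tendsto (fun a => L a / (Real.pi * a ^ 2)) Filter.atTop (nhds (1 / Δ)) := by
  have h0 : Tendsto (fun a : ℝ => 2/(π*a)) atTop (nhds 0) := by
    have heq : (fun a : ℝ => 2/(π*a)) = fun a : ℝ => (2/π) * a⁻¹ := by
      funext a
      rw [div_eq_mul_inv, mul_inv, div_eq_mul_inv]
      ring
    rw [heq]
    simpa using tendsto_inv_atTop_zero.const_mul (2/π)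
  have hlo : Tendsto (fun a : ℝ => 1/Δ - 2/(π*a)) atTop (nhds (1/Δ)) := by
    simpa using tendsto_const_nhds.sub h0
  have hhi : Tendsto (fun a : ℝ => 1/Δ + 2/(π*a)) atTop (nhds (1/Δ)) := by
    simpa using tendsto_const_nhds.add h0
  apply tendsto_of_tendsto_of_tendsto_of_le_of_le' hlo hhi
  · filter_upwards [eventually_gt_atTop (0:ℝ)] with a ha
    have hk := (key Δ hΔ a ha).1
    have hpa : (0:ℝ) < π * a^2 := by positivity
    have heq : (π * a^2/Δ - 2*a)/(π*a^2) = 1/Δ - 2/(π*a) := by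
      field_simp
    rw [hL a, ← heq]
    exact (div_le_div_iff_of_pos_right hpa).mpr hk
  · filter_upwards [eventually_gt_atTop (0:ℝ)] with a ha
    have hk := (key Δ hΔ a ha).2
    have hpa : (0:ℝ) < π * a^2 := by positivity
    have heq : (π * a^2/Δ + 2*a)/(π*a^2) = 1/Δ + 2/(π*a) := by
      field_simp
    rw [hL a, ← heq]
    exact (div_le_div_iff_of_pos_right hpa).mpr hk
end

section
/- Let N ≥ 1 and let 𝖭 ⊂ ℤ^N be a finite lattice-convex set (if a, b ∈ 𝖭 and δ ∈ (0,1) with δa + (1−δ)b ∈ ℤ^N, then δa + (1−δ)b ∈ 𝖭) that contains no translate of the unit cell 𝒰^N = {x ∈ ℤ^N : x_i ∈ {0,1} for all i}. Suppose v : 𝖭 → ℂ and nonzero coefficients τ_{i,m} ∈ ℂ∖{0} satisfy, for every n ∈ 𝖭 and every i ∈ {1,…,N}: Σ_{m ∈ 𝖬_{n,i}} τ_{i,m} v(m) = 0, where 𝖬_{n,i} = {m ∈ 𝖭 : m − n = k·eⁱ for some k ∈ ℤ} and eⁱ is the i-th standard basis vector. Then v(n) = 0 for all n ∈ 𝖭.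 -/
/-- Segment closure: smallest lattice-convex set containing `S`. -/
inductive SegCl {N : ℕ} (S : Set (Fin N → ℤ)) : (Fin N → ℤ) → Prop
  | base (s : Fin N → ℤ) (hs : s ∈ S) : SegCl S s
  | seg (a b : Fin N → ℤ) (ha : SegCl S a) (hb : SegCl S b) (δ : ℝ) (h0 : 0 < δ) (h1 : δ < 1)
      (c : Fin N → ℤ) (hc : ∀ i, (c i : ℝ) = δ * (a i : ℝ) + (1 - δ) * (b i : ℝ)) : SegCl S c

lemma segCl_subset {N : ℕ} (S T : Set (Fin N → ℤ))
    (hT : ∀ a ∈ T, ∀ b ∈ T, ∀ δ : ℝ, 0 < δ → δ < 1 →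
      ∀ c : Fin N → ℤ, (∀ i, (c i : ℝ) = δ * (a i : ℝ) + (1 - δ) * (b i : ℝ)) → c ∈ T)
    (hS : ∀ s ∈ S, s ∈ T) : ∀ x, SegCl S x → x ∈ T := by
  intro x hx
  induction hx with
  | base s hs => exact hS s hs
  | seg a b ha hb δ h0 h1 c hc iha ihb => exact hT a iha b ihb δ h0 h1 c hc

lemma segCl_mono {N : ℕ} (S S' : Set (Fin N → ℤ))
    (h : ∀ s ∈ S, SegCl S' s) : ∀ x, SegCl S x → SegCl S' x := by
  intro x hx
  induction hx with
  | base s hs => exact h s hs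
  | seg a b ha hb δ h0 h1 c hc iha ihb => exact SegCl.seg a b iha ihb δ h0 h1 c hc

lemma segCl_shift {N : ℕ} (S S' : Set (Fin N → ℤ)) (e : Fin N → ℤ)
    (h : ∀ s ∈ S, SegCl S' (s - e)) : ∀ x, SegCl S x → SegCl S' (x - e) := by
  intro x hx
  induction hx with
  | base s hs => exact h s hs
  | seg a b ha hb δ h0 h1 c hc iha ihb =>
    refine SegCl.seg _ _ iha ihb δ h0 h1 _ (fun i => ?_)
    have hci := hc i
    simp only [Pi.sub_apply]
    push_cast
    push_cast at hci
    linear_combination hci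

/-- If `s` and `s'` are in the closure, agree off coordinate `i`, and `s' i < s i`,
then the point one below `s` in direction `i` is in the closure. -/
lemma segCl_step {N : ℕ} (S : Set (Fin N → ℤ)) (i : Fin N) (s s' : Fin N → ℤ)
    (hs : SegCl S s) (hs' : SegCl S s')
    (hj : ∀ j, j ≠ i → s' j = s j) (hlt : s' i < s i) :
    SegCl S (s - fun j => if j = i then 1 else 0) := by
  rcases eq_or_lt_of_le (Int.add_one_le_iff.mpr hlt) with h | h
  · have : (s - fun j => if j = i then 1 else 0) = s' := by
      funext j
      by_cases hji : j = i
      · subst hji; simp [← h]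
      · simp [hji, hj j hji]
    rw [this]; exact hs'
  · -- gap k = s i - s' i ≥ 2
    have hk2 : (2 : ℤ) ≤ s i - s' i := by omega
    have hkpos : (0 : ℝ) < ((s i - s' i : ℤ) : ℝ) := by
      have : (0 : ℤ) < s i - s' i := by omega
      exact_mod_cast this
    refine SegCl.seg s' s hs' hs (1 / ((s i - s' i : ℤ) : ℝ)) (by positivity) ?_ _ (fun j => ?_)
    · rw [div_lt_one hkpos]
      have : (1 : ℤ) < s i - s' i := by omega
      exact_mod_cast this
    · by_cases hji : j = i
      · simp only [Pi.sub_apply, if_pos hji, hji]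
        push_cast
        have hne : (s i : ℝ) - (s' i : ℝ) ≠ 0 := by
          have h3 : (0:ℤ) < s i - s' i := by omega
          have h4 : (0:ℝ) < (s i : ℝ) - (s' i : ℝ) := by exact_mod_cast h3
          exact ne_of_gt h4
        field_simp
        ring
      · simp only [Pi.sub_apply, if_neg hji, hj j hji]
        push_cast
        ring

/-- Key combinatorial lemma: if every point of a nonempty finite set `S` has, for each
direction `i ∈ I`, another point of `S` in its `i`-column, then the segment closure of `S`
contains a translate of the cell `{0,1}^I`. -/
lemma cellLemma {N : ℕ} (I : Finset (Fin N)) :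
    ∀ S : Finset (Fin N → ℤ), S.Nonempty →
    (∀ s ∈ S, ∀ i ∈ I, ∃ s' ∈ S, s' ≠ s ∧ ∀ j, j ≠ i → s' j = s j) →
    ∃ z : Fin N → ℤ, ∀ x : Fin N → ℤ, (∀ i, x i = 0 ∨ x i = 1) →
      (∀ i, i ∉ I → x i = 0) → SegCl (↑S) (x + z) := by
  classical
  induction I using Finset.induction_on with
  | empty =>
    intro S hS _
    obtain ⟨s, hs⟩ := hS
    refine ⟨s, fun x _ hx0 => ?_⟩
    have hx : x = 0 := funext fun i => hx0 i (Finset.notMem_empty i)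
    rw [hx, zero_add]
    exact SegCl.base s hs
  | @insert i0 I' hi0 ih =>
    intro S hS hP
    set T := (S.image (fun s => s i0)).max' (hS.image _) with hT
    set S₁ := S.filter (fun s => s i0 = T) with hS₁def
    have hle : ∀ s ∈ S, s i0 ≤ T := fun s hs =>
      Finset.le_max' (S.image (fun s => s i0)) (s i0) (Finset.mem_image_of_mem _ hs)
    have hS₁ne : S₁.Nonempty := by
      have := (S.image (fun s => s i0)).max'_mem (hS.image _)
      rw [Finset.mem_image] at this
      obtain ⟨s, hsS, hsT⟩ := this
      exact ⟨s, Finset.mem_filter.mpr ⟨hsS, hsT⟩⟩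
    have hP₁ : ∀ s ∈ S₁, ∀ i ∈ I', ∃ s' ∈ S₁, s' ≠ s ∧ ∀ j, j ≠ i → s' j = s j := by
      intro s hs i hi
      rw [Finset.mem_filter] at hs
      obtain ⟨s', hs'S, hs'ne, hs'j⟩ := hP s hs.1 i (Finset.mem_insert_of_mem hi)
      have hii0 : i0 ≠ i := fun hcon => hi0 (hcon ▸ hi)
      refine ⟨s', Finset.mem_filter.mpr ⟨hs'S, ?_⟩, hs'ne, hs'j⟩
      rw [hs'j i0 hii0, hs.2]
    obtain ⟨z', hz'⟩ := ih S₁ hS₁ne hP₁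
    set e : Fin N → ℤ := fun j => if j = i0 then 1 else 0 with he
    have hmono : ∀ x, SegCl ((S₁ : Finset (Fin N → ℤ)) : Set (Fin N → ℤ)) x → SegCl ((S : Finset (Fin N → ℤ)) : Set (Fin N → ℤ)) x := by
      refine segCl_mono _ _ (fun s hs => SegCl.base s ?_)
      exact Finset.mem_of_mem_filter s hs
    have hdown : ∀ s ∈ ((S₁ : Finset (Fin N → ℤ)) : Set (Fin N → ℤ)), SegCl ((S : Finset (Fin N → ℤ)) : Set (Fin N → ℤ)) (s - e) := by
      intro s hs
      have hs' := hs
      rw [Finset.mem_coe, Finset.mem_filter] at hs'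
      obtain ⟨s', hs'S, hs'ne, hs'j⟩ := hP s hs'.1 i0 (Finset.mem_insert_self _ _)
      have hne : s' i0 ≠ s i0 := by
        intro hcon
        exact hs'ne (funext fun j => by
          by_cases hji : j = i0
          · subst hji; exact hcon
          · exact hs'j j hji)
      have hlt : s' i0 < s i0 := lt_of_le_of_ne (hs'.2 ▸ hle s' hs'S) hne
      exact segCl_step _ i0 s s' (SegCl.base s hs'.1) (SegCl.base s' hs'S) hs'j hlt
    have hshift := segCl_shift ((S₁ : Finset (Fin N → ℤ)) : Set (Fin N → ℤ)) ((S : Finset (Fin N → ℤ)) : Set (Fin N → ℤ)) e hdown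
    refine ⟨z' - e, fun x hx01 hxI => ?_⟩
    rcases hx01 i0 with h0 | h1
    · -- x i0 = 0
      have hx' : ∀ i, i ∉ I' → x i = 0 := by
        intro i hiI'
        by_cases hii : i = i0
        · subst hii; exact h0
        · exact hxI i (by simp [Finset.mem_insert, hii, hiI'])
      have := hshift _ (hz' x hx01 hx')
      have heq2 : x + z' - e = x + (z' - e) := by abel
      rwa [heq2] at this
    · -- x i0 = 1
      set x₂ := x - e with hx₂
      have hx₂01 : ∀ i, x₂ i = 0 ∨ x₂ i = 1 := by
        intro i
        by_cases hii : i = i0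
        · subst hii; left; simp [hx₂, he, h1]
        · simpa [hx₂, he, hii] using hx01 i
      have hx₂I : ∀ i, i ∉ I' → x₂ i = 0 := by
        intro i hiI'
        by_cases hii : i = i0
        · subst hii; simp [hx₂, he, h1]
        · have := hxI i (by simp [Finset.mem_insert, hii, hiI'])
          simp [hx₂, he, hii, this]
      have := hmono _ (hz' x₂ hx₂01 hx₂I)
      have heq2 : x₂ + z' = x + (z' - e) := by simp [hx₂]; abel
      rwa [heq2] at this

theorem stmt11 (N : ℕ) (hN : 1 ≤ N) (Ns : Finset (Fin N → ℤ))
    (hconv : ∀ a ∈ Ns, ∀ b ∈ Ns, ∀ δ : ℝ, 0 < δ → δ < 1 →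
      ∀ c : Fin N → ℤ, (∀ i, (c i : ℝ) = δ * (a i : ℝ) + (1 - δ) * (b i : ℝ)) → c ∈ Ns)
    (hcell : ¬ ∃ z : Fin N → ℤ, ∀ x : Fin N → ℤ, (∀ i, x i = 0 ∨ x i = 1) → x + z ∈ Ns)
    (v : (Fin N → ℤ) → ℂ) (τ : Fin N → (Fin N → ℤ) → ℂ)
    (hτ : ∀ i m, τ i m ≠ 0)
    (heq : ∀ n ∈ Ns, ∀ i : Fin N,
      ∑ m ∈ Ns.filter (fun m => ∀ j, j ≠ i → m j = n j), τ i m * v m = 0) :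
    ∀ n ∈ Ns, v n = 0 := by
  classical
  intro n hn
  by_contra hv
  set S := Ns.filter (fun m => v m ≠ 0) with hSdef
  have hSne : S.Nonempty := ⟨n, Finset.mem_filter.mpr ⟨hn, hv⟩⟩
  have hP : ∀ s ∈ S, ∀ i ∈ (Finset.univ : Finset (Fin N)),
      ∃ s' ∈ S, s' ≠ s ∧ ∀ j, j ≠ i → s' j = s j := by
    intro s hsS i _
    rw [Finset.mem_filter] at hsS
    obtain ⟨hsN, hvs⟩ := hsS
    have hsum := heq s hsN i
    by_contra hcon
    push_neg at hcon
    have hsM : s ∈ Ns.filter (fun m => ∀ j, j ≠ i → m j = s j) :=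
      Finset.mem_filter.mpr ⟨hsN, fun j _ => rfl⟩
    have hsingle : ∑ m ∈ Ns.filter (fun m => ∀ j, j ≠ i → m j = s j), τ i m * v m
        = τ i s * v s := by
      refine Finset.sum_eq_single_of_mem s hsM (fun b hb hbs => ?_)
      rw [Finset.mem_filter] at hb
      have hvb : v b = 0 := by
        by_contra hvb
        obtain ⟨j, hji, hjb⟩ := hcon b (Finset.mem_filter.mpr ⟨hb.1, hvb⟩) hbs
        exact hjb (hb.2 j hji)
      rw [hvb, mul_zero]
    rw [hsum] at hsingle
    exact hτ i s (by
      rcases mul_eq_zero.mp hsingle.symm with h | h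
      · exact h
      · exact absurd h hvs)
  obtain ⟨z, hz⟩ := cellLemma (Finset.univ : Finset (Fin N)) S hSne hP
  refine hcell ⟨z, fun x hx => ?_⟩
  exact segCl_subset (↑S) {m : Fin N → ℤ | m ∈ Ns} hconv
    (fun s hs => Finset.mem_of_mem_filter s hs) _
    (hz x hx (fun i hi => absurd (Finset.mem_univ i) hi))
end
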